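/- For every point q ∈ ℍℙ¹, the fiber π⁻¹(q) of the twistor projection is a twistor line: there exists a 2-dimensional complex subspace W ⊆ ℂ⁴ with j̃(W) = W such that π⁻¹(q) = ℙ(W). -/

import Mathlib

/-- The conjugate-linear map `j̃ : ℂ⁴ → ℂ⁴`,
`j̃(z₀,z₁,z₂,z₃) = (−conj z₁, conj z₀, −conj z₃, conj z₂)`,
inducing the fixed-point-free anti-holomorphic involution `j` on `ℂℙ³`. -/
noncomputable def jt (z : Fin 4 → ℂ) : Fin 4 → ℂ :=
  ![-(starRingEnd ℂ) (z 1), (starRingEnd ℂ) (z 0), -(starRingEnd ℂ) (z 3), (starRingEnd ℂ) (z 2)]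

lemma jt_ne_zero {z : Fin 4 → ℂ} (hz : z ≠ 0) : jt z ≠ 0 := by
  intro h
  apply hz
  have h0 := congrFun h 0
  have h1 := congrFun h 1
  have h2 := congrFun h 2
  have h3 := congrFun h 3
  simp [jt] at h0 h1 h2 h3
  funext i
  fin_cases i <;> simp [h0, h1, h2, h3]

/-- The embedding `ℂ → ℍ` identifying `ℂ` with the subfield of `ℍ` spanned by `1` and `i`. -/
noncomputable def toQ (z : ℂ) : Quaternion ℝ := ⟨z.re, z.im, 0, 0⟩

/-- The imaginary unit `j ∈ ℍ`. -/
noncomputable def qJ : Quaternion ℝ := ⟨0, 0, 1, 0⟩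

lemma toQ_add_mul (a b : ℂ) :
    toQ a + toQ b * qJ = (⟨a.re, a.im, b.re, b.im⟩ : Quaternion ℝ) := by
  have h1 : ∀ z : ℂ, (toQ z).re = z.re := fun _ => rfl
  have h2 : ∀ z : ℂ, (toQ z).imI = z.im := fun _ => rfl
  have h3 : ∀ z : ℂ, (toQ z).imJ = 0 := fun _ => rfl
  have h4 : ∀ z : ℂ, (toQ z).imK = 0 := fun _ => rfl
  have h5 : qJ.re = 0 := rfl
  have h6 : qJ.imI = 0 := rfl
  have h7 : qJ.imJ = 1 := rfl
  have h8 : qJ.imK = 0 := rfl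
  ext <;> simp [Quaternion.re_mul, Quaternion.imI_mul, Quaternion.imJ_mul, Quaternion.imK_mul,
    h1, h2, h3, h4, h5, h6, h7, h8] <;> rfl

/-- The vector-level twistor projection `(z₀,z₁,z₂,z₃) ↦ (z₀+z₁j, z₂+z₃j) ∈ ℍ²`. -/
noncomputable def piv (z : Fin 4 → ℂ) : Fin 2 → Quaternion ℝ :=
  ![toQ (z 0) + toQ (z 1) * qJ, toQ (z 2) + toQ (z 3) * qJ]

lemma piv_ne_zero {z : Fin 4 → ℂ} (hz : z ≠ 0) : piv z ≠ 0 := by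
  intro h
  apply hz
  have h0 := congrFun h 0
  have h1 := congrFun h 1
  simp only [piv, toQ_add_mul, Matrix.cons_val_zero, Matrix.cons_val_one, Matrix.head_cons,
    Pi.zero_apply] at h0 h1
  rw [Quaternion.ext_iff] at h0 h1
  simp at h0 h1
  funext i
  fin_cases i <;> apply Complex.ext <;> simp [h0.1, h0.2.1, h0.2.2.1, h0.2.2.2,
    h1.1, h1.2.1, h1.2.2.1, h1.2.2.2] <;> rfl

/-- The twistor projection `π : ℂℙ³ → ℍℙ¹`, `π[z₀,z₁,z₂,z₃] = [z₀+z₁j, z₂+z₃j]`,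
where `ℍℙ¹` is the projectivization of `ℍ²` as a left `ℍ`-module. -/
noncomputable def twistorProj (x : Projectivization ℂ (Fin 4 → ℂ)) :
    Projectivization (Quaternion ℝ) (Fin 2 → Quaternion ℝ) :=
  Projectivization.mk (Quaternion ℝ) (piv x.rep) (piv_ne_zero x.rep_nonzero)

/-- The projectivization `ℙ(W) ⊆ ℂℙ³` of a complex subspace `W ⊆ ℂ⁴`:
the set of points of `ℂℙ³` whose representatives lie in `W`. -/
def projSet (W : Submodule ℂ (Fin 4 → ℂ)) : Set (Projectivization ℂ (Fin 4 → ℂ)) :=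
  {x | x.rep ∈ W}

lemma mul_rule (z₀ z₁ c₁ c₂ : ℂ) :
    (toQ z₀ + toQ z₁ * qJ) * (toQ c₁ + toQ c₂ * qJ)
      = toQ (z₀*c₁ - z₁ * (starRingEnd ℂ) c₂) + toQ (z₀*c₂ + z₁ * (starRingEnd ℂ) c₁) * qJ := by
  have h1 : ∀ z : ℂ, (toQ z).re = z.re := fun _ => rfl
  have h2 : ∀ z : ℂ, (toQ z).imI = z.im := fun _ => rfl
  have h3 : ∀ z : ℂ, (toQ z).imJ = 0 := fun _ => rfl
  have h4 : ∀ z : ℂ, (toQ z).imK = 0 := fun _ => rfl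
  have h5 : qJ.re = 0 := rfl
  have h6 : qJ.imI = 0 := rfl
  have h7 : qJ.imJ = 1 := rfl
  have h8 : qJ.imK = 0 := rfl
  ext <;> simp [Quaternion.re_mul, Quaternion.imI_mul, Quaternion.imJ_mul, Quaternion.imK_mul,
    h1, h2, h3, h4, h5, h6, h7, h8, Complex.mul_re, Complex.mul_im] <;> ring
lemma addmul_inj {a b a' b' : ℂ} (h : toQ a + toQ b * qJ = toQ a' + toQ b' * qJ) :
    a = a' ∧ b = b' := by
  rw [toQ_add_mul, toQ_add_mul] at h
  exact ⟨Complex.ext (congrArg QuaternionAlgebra.re h) (congrArg QuaternionAlgebra.imI h),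
    Complex.ext (congrArg QuaternionAlgebra.imJ h) (congrArg QuaternionAlgebra.imK h)⟩
lemma quat_decomp (c : Quaternion ℝ) :
    c = toQ ⟨c.re, c.imI⟩ + toQ ⟨c.imJ, c.imK⟩ * qJ := by
  rw [toQ_add_mul]; rfl

lemma exists_unit_iff_zero {v p : Fin 2 → Quaternion ℝ} (h0 : v 0 ≠ 0) (hp : p ≠ 0) :
    (∃ a : (Quaternion ℝ)ˣ, a • v = p) ↔ p 1 = p 0 * ((v 0)⁻¹ * v 1) := by
  constructor
  · rintro ⟨a, rfl⟩
    show (a : Quaternion ℝ) * v 1 = (a : Quaternion ℝ) * v 0 * ((v 0)⁻¹ * v 1)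
    rw [mul_assoc, ← mul_assoc (v 0), mul_inv_cancel₀ h0, one_mul]
  · intro h
    have hp0 : p 0 ≠ 0 := by
      intro h'
      apply hp
      funext i; fin_cases i
      · exact h'
      · show p 1 = (0 : Fin 2 → Quaternion ℝ) 1
        rw [h, h', zero_mul]; rfl
    refine ⟨Units.mk0 (p 0 * (v 0)⁻¹) (mul_ne_zero hp0 (inv_ne_zero h0)), ?_⟩
    funext i; fin_cases i
    · show p 0 * (v 0)⁻¹ * v 0 = p 0
      rw [mul_assoc, inv_mul_cancel₀ h0, mul_one]
    · show p 0 * (v 0)⁻¹ * v 1 = p 1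
      rw [mul_assoc, ← h]

lemma exists_unit_iff_one {v p : Fin 2 → Quaternion ℝ} (h1 : v 1 ≠ 0) (hp : p ≠ 0) :
    (∃ a : (Quaternion ℝ)ˣ, a • v = p) ↔ p 0 = p 1 * ((v 1)⁻¹ * v 0) := by
  constructor
  · rintro ⟨a, rfl⟩
    show (a : Quaternion ℝ) * v 0 = (a : Quaternion ℝ) * v 1 * ((v 1)⁻¹ * v 0)
    rw [mul_assoc, ← mul_assoc (v 1), mul_inv_cancel₀ h1, one_mul]
  · intro h
    have hp1 : p 1 ≠ 0 := by
      intro h'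
      apply hp
      funext i; fin_cases i
      · show p 0 = (0 : Fin 2 → Quaternion ℝ) 0
        rw [h, h', zero_mul]; rfl
      · exact h'
    refine ⟨Units.mk0 (p 1 * (v 1)⁻¹) (mul_ne_zero hp1 (inv_ne_zero h1)), ?_⟩
    funext i; fin_cases i
    · show p 1 * (v 1)⁻¹ * v 0 = p 0
      rw [mul_assoc, ← h]
    · show p 1 * (v 1)⁻¹ * v 1 = p 1
      rw [mul_assoc, inv_mul_cancel₀ h1, mul_one]

lemma key_true {c : Quaternion ℝ} {c₁ c₂ : ℂ} (hc : c = toQ c₁ + toQ c₂ * qJ) (z : Fin 4 → ℂ) :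
    piv z 1 = piv z 0 * c ↔
      (z 2 = z 0 * c₁ - z 1 * (starRingEnd ℂ) c₂ ∧ z 3 = z 0 * c₂ + z 1 * (starRingEnd ℂ) c₁) := by
  rw [hc, show piv z 1 = toQ (z 2) + toQ (z 3) * qJ from rfl,
      show piv z 0 = toQ (z 0) + toQ (z 1) * qJ from rfl, mul_rule]
  constructor
  · exact addmul_inj
  · rintro ⟨h2, h3⟩; rw [h2, h3]

lemma key_false {c : Quaternion ℝ} {c₁ c₂ : ℂ} (hc : c = toQ c₁ + toQ c₂ * qJ) (z : Fin 4 → ℂ) :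
    piv z 0 = piv z 1 * c ↔
      (z 0 = z 2 * c₁ - z 3 * (starRingEnd ℂ) c₂ ∧ z 1 = z 2 * c₂ + z 3 * (starRingEnd ℂ) c₁) := by
  rw [hc, show piv z 1 = toQ (z 2) + toQ (z 3) * qJ from rfl,
      show piv z 0 = toQ (z 0) + toQ (z 1) * qJ from rfl, mul_rule]
  constructor
  · exact addmul_inj
  · rintro ⟨h2, h3⟩; rw [h2, h3]

noncomputable def gmap (c₁ c₂ : ℂ) (s : Bool) : (Fin 2 → ℂ) →ₗ[ℂ] (Fin 4 → ℂ) where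
  toFun w := if s then ![w 0, w 1, w 0 * c₁ - w 1 * (starRingEnd ℂ) c₂, w 0 * c₂ + w 1 * (starRingEnd ℂ) c₁]
    else ![w 0 * c₁ - w 1 * (starRingEnd ℂ) c₂, w 0 * c₂ + w 1 * (starRingEnd ℂ) c₁, w 0, w 1]
  map_add' w v := by cases s <;> funext i <;> fin_cases i <;> simp <;> ring
  map_smul' a w := by cases s <;> funext i <;> fin_cases i <;> simp <;> ring
noncomputable def Wsub (c₁ c₂ : ℂ) (s : Bool) : Submodule ℂ (Fin 4 → ℂ) :=
  LinearMap.range (gmap c₁ c₂ s)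
lemma mem_Wsub_true (c₁ c₂ : ℂ) (z : Fin 4 → ℂ) :
    z ∈ Wsub c₁ c₂ true ↔
      z 2 = z 0 * c₁ - z 1 * (starRingEnd ℂ) c₂ ∧ z 3 = z 0 * c₂ + z 1 * (starRingEnd ℂ) c₁ := by
  constructor
  · rintro ⟨w, rfl⟩; simp [gmap]
  · rintro ⟨h2, h3⟩
    exact ⟨![z 0, z 1], by funext i; fin_cases i <;> simp [gmap, h2.symm, h3.symm]⟩
lemma mem_Wsub_false (c₁ c₂ : ℂ) (z : Fin 4 → ℂ) :
    z ∈ Wsub c₁ c₂ false ↔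
      z 0 = z 2 * c₁ - z 3 * (starRingEnd ℂ) c₂ ∧ z 1 = z 2 * c₂ + z 3 * (starRingEnd ℂ) c₁ := by
  constructor
  · rintro ⟨w, rfl⟩; simp [gmap]
  · rintro ⟨h2, h3⟩
    exact ⟨![z 2, z 3], by funext i; fin_cases i <;> simp [gmap, h2.symm, h3.symm]⟩

lemma jt_mem (c₁ c₂ : ℂ) (s : Bool) {z : Fin 4 → ℂ} (hz : z ∈ Wsub c₁ c₂ s) :
    jt z ∈ Wsub c₁ c₂ s := by
  cases s
  · rw [mem_Wsub_false] at hz ⊢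
    obtain ⟨h2, h3⟩ := hz
    constructor <;> simp [jt, h2, h3, map_sub, map_add, map_mul] <;> ring
  · rw [mem_Wsub_true] at hz ⊢
    obtain ⟨h2, h3⟩ := hz
    constructor <;> simp [jt, h2, h3, map_sub, map_add, map_mul] <;> ring

lemma jt_jt_neg (z : Fin 4 → ℂ) : jt (jt (-z)) = z := by
  funext i; fin_cases i <;> simp [jt]

lemma jt_image (c₁ c₂ : ℂ) (s : Bool) :
    jt '' (Wsub c₁ c₂ s : Set (Fin 4 → ℂ)) = (Wsub c₁ c₂ s : Set (Fin 4 → ℂ)) := by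
  ext z
  constructor
  · rintro ⟨y, hy, rfl⟩; exact jt_mem c₁ c₂ s hy
  · intro hz
    exact ⟨jt (-z), jt_mem c₁ c₂ s ((Wsub c₁ c₂ s).neg_mem hz), jt_jt_neg z⟩


lemma gmap_inj (c₁ c₂ : ℂ) (s : Bool) : Function.Injective (gmap c₁ c₂ s) := by
  intro w v h
  cases s <;> funext i <;> fin_cases i <;>
    first
    | (simpa [gmap] using congrFun h 0)
    | (simpa [gmap] using congrFun h 1)
    | (simpa [gmap] using congrFun h 2)
    | (simpa [gmap] using congrFun h 3)

lemma Wsub_finrank (c₁ c₂ : ℂ) (s : Bool) : Module.finrank ℂ (Wsub c₁ c₂ s) = 2 := by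
  rw [Wsub, LinearMap.finrank_range_of_inj (gmap_inj c₁ c₂ s)]
  simp

/-- Every fiber of the twistor projection `π : ℂℙ³ → ℍℙ¹` is a twistor line: for every
`q ∈ ℍℙ¹` there is a 2-dimensional complex subspace `W ⊆ ℂ⁴` with `j̃(W) = W` such that
`π⁻¹(q) = ℙ(W)`. -/
theorem stmt5 (q : Projectivization (Quaternion ℝ) (Fin 2 → Quaternion ℝ)) :
    ∃ W : Submodule ℂ (Fin 4 → ℂ), Module.finrank ℂ W = 2 ∧
      jt '' (W : Set (Fin 4 → ℂ)) = (W : Set (Fin 4 → ℂ)) ∧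
      twistorProj ⁻¹' {q} = projSet W := by
  rcases eq_or_ne (q.rep 0) 0 with h0 | h0
  · -- second coordinate nonzero
    have h1 : q.rep 1 ≠ 0 := by
      intro h1
      apply q.rep_nonzero
      funext i; fin_cases i
      · exact h0
      · exact h1
    set c : Quaternion ℝ := (q.rep 1)⁻¹ * q.rep 0 with hc
    refine ⟨Wsub ⟨c.re, c.imI⟩ ⟨c.imJ, c.imK⟩ false, Wsub_finrank _ _ _,
      jt_image _ _ _, ?_⟩
    ext x
    simp only [Set.mem_preimage, Set.mem_singleton_iff, projSet, Set.mem_setOf_eq, twistorProj]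
    rw [← Projectivization.mk_rep q, Projectivization.mk_eq_mk_iff,
      exists_unit_iff_one h1 (piv_ne_zero x.rep_nonzero),
      key_false (quat_decomp c) x.rep, mem_Wsub_false]
  · set c : Quaternion ℝ := (q.rep 0)⁻¹ * q.rep 1 with hc
    refine ⟨Wsub ⟨c.re, c.imI⟩ ⟨c.imJ, c.imK⟩ true, Wsub_finrank _ _ _,
      jt_image _ _ _, ?_⟩
    ext x
    simp only [Set.mem_preimage, Set.mem_singleton_iff, projSet, Set.mem_setOf_eq, twistorProj]
    rw [← Projectivization.mk_rep q, Projectivization.mk_eq_mk_iff,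
      exists_unit_iff_zero h0 (piv_ne_zero x.rep_nonzero),
      key_true (quat_decomp c) x.rep, mem_Wsub_true]
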